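/- arXiv:1212.1740 — 2 statements merged into one kernel-verified Lean document; each statement's English description precedes it below -/
import Mathlib

section
/- For a bipartite graph with quotient matrix P̄ = [[0,1],[1,0]] and T positive, bounded, decreasing with |T'(u*)| > 1 at the fixed point u*, the system z = P̄·(T(z_1),T(z_2)) has a solution (z_1,z_2) with z_1 ≠ z_2 — equivalently, the map T∘T has a fixed point other than u*. -/
theorem bipartite_nonhomogeneous_steady_state
    (T : ℝ → ℝ) (hcd : ContDiff ℝ 1 T)
    (hpos : ∀ x, 0 < T x) (hbdd : ∃ M, ∀ x, T x ≤ M)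
    (hanti : StrictAnti T)
    (ustar : ℝ) (hfix : T ustar = ustar)
    (hslope : 1 < |deriv T ustar|) :
    ∃ z1 z2 : ℝ, z1 = T z2 ∧ z2 = T z1 ∧ z1 ≠ z2 := by
  obtain ⟨M, hM⟩ := hbdd
  have hdiff : Differentiable ℝ T := hcd.differentiable one_ne_zero
  have hcont : Continuous T := hdiff.continuous
  set d := deriv T ustar with hd
  have h1 : HasDerivAt T d ustar := (hdiff ustar).hasDerivAt
  have h2 : HasDerivAt T d (T ustar) := by rw [hfix]; exact h1
  have hgd : HasDerivAt (fun x => T (T x)) (d * d) ustar := h2.comp ustar h1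
  have hd2 : 1 < d * d := by
    nlinarith [abs_mul_abs_self d, abs_nonneg d, hslope]
  -- h x = T (T x) - x has derivative d*d - 1 > 0 at ustar, and h ustar = 0
  set h : ℝ → ℝ := fun x => T (T x) - x with hh
  have hhd : HasDerivAt h (d * d - 1) ustar := hgd.sub (hasDerivAt_id ustar)
  have hzero : h ustar = 0 := by simp [hh, hfix]
  -- there is a > ustar with h a > 0
  have hslopet : Filter.Tendsto (slope h ustar) (nhdsWithin ustar {ustar}ᶜ)
      (nhds (d * d - 1)) := hasDerivAt_iff_tendsto_slope.mp hhd
  have hslopet' : Filter.Tendsto (slope h ustar) (nhdsWithin ustar (Set.Ioi ustar))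
      (nhds (d * d - 1)) :=
    hslopet.mono_left (nhdsWithin_mono _ (fun x hx => ne_of_gt hx))
  have hev : ∀ᶠ x in nhdsWithin ustar (Set.Ioi ustar), 0 < slope h ustar x :=
    hslopet'.eventually (eventually_gt_nhds (by linarith))
  obtain ⟨a, hsl, hau⟩ :=
    (hev.and self_mem_nhdsWithin).exists
  have hau : ustar < a := hau
  have hha : 0 < h a := by
    rw [slope_def_field, hzero, sub_zero] at hsl
    have hpos' : 0 < a - ustar := by linarith
    have := (div_pos_iff.mp hsl)
    rcases this with ⟨h1', _⟩ | ⟨_, h2'⟩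
    · exact h1'
    · linarith
  -- h a > 0 means a < M since T (T a) ≤ M
  have haM : a < M := by
    have : T (T a) ≤ M := hM _
    have : a < T (T a) := by simpa [hh] using hha
    linarith [hM (T a)]
  have hhM : h M ≤ 0 := by
    have : T (T M) ≤ M := hM _
    simpa [hh] using this
  -- IVT on [a, M]
  have hconth : ContinuousOn h (Set.Icc a M) :=
    ((hcont.comp hcont).sub continuous_id).continuousOn
  have hsub : Set.Icc (h M) (h a) ⊆ h '' Set.Icc a M :=
    intermediate_value_Icc' (le_of_lt haM) hconth
  obtain ⟨c, hcmem, hcz⟩ := hsub ⟨hhM, le_of_lt hha⟩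
  have hcu : ustar < c := lt_of_lt_of_le hau hcmem.1
  have hgc : T (T c) = c := by
    have : T (T c) - c = 0 := hcz
    linarith
  refine ⟨T c, c, rfl, hgc.symm, ?_⟩
  intro hEq
  -- T c = c with c > ustar contradicts T strictly decreasing
  have : T c < T ustar := hanti hcu
  rw [hfix, hEq] at this
  linarith
end

section
/- Let P be the scaled adjacency matrix of a connected weighted graph with equitable partition into classes O_1,...,O_r, and let Γ be a positive diagonal matrix with γ_{jj} = γ̄_i whenever j ∈ O_i. Then the partition is also equitable for PΓ, and the spectral radii coincide: ρ(PΓ) = ρ(P̄Γ̄), where Γ̄ = diag(γ̄_1,...,γ̄_r) and P̄ is the quotient matrix. In particular ρ(PΓ) < 1 iff ρ(P̄Γ̄) < 1. -/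
open Matrix Finset

/-- The spectral radius of a real square matrix: the supremum of the absolute
values of its complex eigenvalues. -/
noncomputable def specRad {n : ℕ} (A : Matrix (Fin n) (Fin n) ℝ) : ℝ :=
  sSup {x : ℝ | ∃ μ ∈ spectrum ℂ (A.map Complex.ofReal), x = ‖μ‖}

open scoped ENNReal NNReal

attribute [local instance] Matrix.linftyOpNormedRing Matrix.linftyOpNormedAlgebra
  Matrix.linftyOpNormedSpace

section Aux
variable {n m : ℕ}

lemma quot_pow (A : Matrix (Fin n) (Fin n) ℝ) (Ab : Matrix (Fin m) (Fin m) ℝ)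
    (c : Fin n → Fin m)
    (hq : ∀ u j, ∑ v ∈ Finset.univ.filter (fun v => c v = j), A u v = Ab (c u) j) :
    ∀ (k : ℕ) (u : Fin n) (j : Fin m),
      ∑ v ∈ Finset.univ.filter (fun v => c v = j), (A ^ k) u v = (Ab ^ k) (c u) j := by
  intro k
  induction k with
  | zero =>
    intro u j
    simp only [pow_zero, Matrix.one_apply]
    rw [Finset.sum_ite_eq]
    simp [eq_comm]
  | succ k ih =>
    intro u j
    rw [pow_succ, pow_succ]
    simp only [Matrix.mul_apply]
    rw [Finset.sum_comm]
    calc ∑ w, ∑ v ∈ Finset.univ.filter (fun v => c v = j), (A ^ k) u w * A w v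
        = ∑ w, (A ^ k) u w * Ab (c w) j := by
          refine Finset.sum_congr rfl fun w _ => ?_
          rw [← Finset.mul_sum, hq]
      _ = ∑ i, ∑ w ∈ Finset.univ.filter (fun w => c w = i), (A ^ k) u w * Ab (c w) j :=
          (Finset.sum_fiberwise _ _ _).symm
      _ = ∑ i, (Ab ^ k) (c u) i * Ab i j := by
          refine Finset.sum_congr rfl fun i _ => ?_
          rw [← ih u i, Finset.sum_mul]
          exact Finset.sum_congr rfl fun w hw => by
            rw [(Finset.mem_filter.mp hw).2]
end Aux

section Aux2
variable {n m : ℕ}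

lemma spec_subset (A : Matrix (Fin n) (Fin n) ℝ) (Ab : Matrix (Fin m) (Fin m) ℝ)
    (c : Fin n → Fin m) (hc : Function.Surjective c)
    (hq : ∀ u j, ∑ v ∈ Finset.univ.filter (fun v => c v = j), A u v = Ab (c u) j) :
    spectrum ℂ (Ab.map Complex.ofReal) ⊆ spectrum ℂ (A.map Complex.ofReal) := by
  have hqC : ∀ (u : Fin n) (j : Fin m),
      ∑ v ∈ Finset.univ.filter (fun v => c v = j), (A.map Complex.ofReal) u v
        = (Ab.map Complex.ofReal) (c u) j := by
    intro u j
    simp only [Matrix.map_apply, ← Complex.ofReal_sum, hq]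
  intro μ hμ
  rw [← AlgEquiv.spectrum_eq (Matrix.toLinAlgEquiv' (n := Fin m) (R := ℂ)),
    ← Module.End.hasEigenvalue_iff_mem_spectrum] at hμ
  obtain ⟨x, hx⟩ := hμ.exists_hasEigenvector
  have hxe : (Ab.map Complex.ofReal) *ᵥ x = μ • x := by
    have := hx.apply_eq_smul
    rwa [Matrix.toLinAlgEquiv'_apply] at this
  rw [← AlgEquiv.spectrum_eq (Matrix.toLinAlgEquiv' (n := Fin n) (R := ℂ)),
    ← Module.End.hasEigenvalue_iff_mem_spectrum]
  refine Module.End.hasEigenvalue_of_hasEigenvector (x := x ∘ c) ⟨?_, ?_⟩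
  · rw [Module.End.mem_eigenspace_iff, Matrix.toLinAlgEquiv'_apply]
    funext u
    have : ((A.map Complex.ofReal) *ᵥ (x ∘ c)) u = ((Ab.map Complex.ofReal) *ᵥ x) (c u) := by
      simp only [Matrix.mulVec, dotProduct, Function.comp]
      rw [← Finset.sum_fiberwise Finset.univ c (fun v => (A.map Complex.ofReal) u v * x (c v))]
      refine Finset.sum_congr rfl fun j _ => ?_
      rw [← hqC u j, Finset.sum_mul]
      exact Finset.sum_congr rfl fun v hv => by rw [(Finset.mem_filter.mp hv).2]
    rw [this, hxe]
    rfl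
  · intro h
    obtain ⟨j, hj⟩ := Function.ne_iff.mp hx.2
    obtain ⟨v, rfl⟩ := hc j
    exact hj (congrFun h v)

end Aux2

section Aux3
variable {n m : ℕ}

lemma pow_entry_nonneg (A : Matrix (Fin n) (Fin n) ℝ) (hA : ∀ i j, 0 ≤ A i j) :
    ∀ (k : ℕ) (i j : Fin n), 0 ≤ (A ^ k) i j := by
  intro k
  induction k with
  | zero => intro i j; by_cases h : i = j <;> simp [pow_zero, Matrix.one_apply, h]
  | succ k ih =>
    intro i j
    rw [pow_succ, Matrix.mul_apply]
    exact Finset.sum_nonneg fun w _ => mul_nonneg (ih i w) (hA w j)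

lemma map_pow_ofReal (A : Matrix (Fin n) (Fin n) ℝ) (k : ℕ) :
    (A.map Complex.ofReal) ^ k = (A ^ k).map Complex.ofReal := by
  have h : ∀ (M : Matrix (Fin n) (Fin n) ℝ), M.map Complex.ofReal
      = Complex.ofRealHom.mapMatrix M := fun _ => rfl
  rw [h, h, map_pow]

lemma eqpart_nnnorm_pow_le (A : Matrix (Fin n) (Fin n) ℝ) (Ab : Matrix (Fin m) (Fin m) ℝ)
    (c : Fin n → Fin m) (hA : ∀ i j, 0 ≤ A i j)
    (hq : ∀ u j, ∑ v ∈ Finset.univ.filter (fun v => c v = j), A u v = Ab (c u) j)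
    (k : ℕ) :
    ‖(A.map Complex.ofReal) ^ k‖₊ ≤ ‖(Ab.map Complex.ofReal) ^ k‖₊ := by
  rw [map_pow_ofReal, map_pow_ofReal, Matrix.linfty_opNNNorm_def]
  refine Finset.sup_le fun u _ => ?_
  rw [← NNReal.coe_le_coe]
  push_cast
  calc (∑ v, ‖((A ^ k).map Complex.ofReal) u v‖ : ℝ)
      = ∑ v, (A ^ k) u v := by
        refine Finset.sum_congr rfl fun v _ => ?_
        rw [Matrix.map_apply, Complex.norm_real, Real.norm_eq_abs, abs_of_nonneg (pow_entry_nonneg A hA k u v)]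
    _ = ∑ j, ∑ v ∈ Finset.univ.filter (fun v => c v = j), (A ^ k) u v :=
        (Finset.sum_fiberwise _ _ _).symm
    _ = ∑ j, (Ab ^ k) (c u) j := by
        exact Finset.sum_congr rfl fun j _ => quot_pow A Ab c hq k u j
    _ ≤ ∑ j, ‖((Ab ^ k).map Complex.ofReal) (c u) j‖ := by
        refine Finset.sum_le_sum fun j _ => ?_
        rw [Matrix.map_apply, Complex.norm_real, Real.norm_eq_abs]
        exact le_abs_self _
    _ ≤ ‖(Ab ^ k).map Complex.ofReal‖ := by
        have h := Finset.le_sup (f := fun i => ∑ j, ‖((Ab ^ k).map Complex.ofReal) i j‖₊)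
          (Finset.mem_univ (c u))
        rw [← Matrix.linfty_opNNNorm_def] at h
        have := NNReal.coe_le_coe.mpr h
        push_cast at this
        exact this

end Aux3

section Aux4
variable {n m : ℕ}

lemma eqpart_specrad_le (A : Matrix (Fin n) (Fin n) ℝ) (Ab : Matrix (Fin m) (Fin m) ℝ)
    (c : Fin n → Fin m) (hA : ∀ i j, 0 ≤ A i j)
    (hq : ∀ u j, ∑ v ∈ Finset.univ.filter (fun v => c v = j), A u v = Ab (c u) j) :
    spectralRadius ℂ (A.map Complex.ofReal) ≤ spectralRadius ℂ (Ab.map Complex.ofReal) := by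
  haveI : CompleteSpace (Matrix (Fin n) (Fin n) ℂ) := FiniteDimensional.complete ℂ _
  haveI : CompleteSpace (Matrix (Fin m) (Fin m) ℂ) := FiniteDimensional.complete ℂ _
  refine le_of_tendsto_of_tendsto'
    (spectrum.pow_nnnorm_pow_one_div_tendsto_nhds_spectralRadius (A.map Complex.ofReal))
    (spectrum.pow_nnnorm_pow_one_div_tendsto_nhds_spectralRadius (Ab.map Complex.ofReal))
    fun k => ?_
  refine ENNReal.rpow_le_rpow ?_ (by positivity)
  exact_mod_cast eqpart_nnnorm_pow_le A Ab c hA hq k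

lemma eqpart_specrad_ge (A : Matrix (Fin n) (Fin n) ℝ) (Ab : Matrix (Fin m) (Fin m) ℝ)
    (c : Fin n → Fin m) (hc : Function.Surjective c)
    (hq : ∀ u j, ∑ v ∈ Finset.univ.filter (fun v => c v = j), A u v = Ab (c u) j) :
    spectralRadius ℂ (Ab.map Complex.ofReal) ≤ spectralRadius ℂ (A.map Complex.ofReal) := by
  have hs := spec_subset A Ab c hc hq
  rw [spectralRadius, spectralRadius]
  exact iSup₂_le fun μ hμ => le_iSup₂_of_le μ (hs hμ) le_rfl

lemma eqpart_sSup_eq (hn : 0 < n) (B : Matrix (Fin n) (Fin n) ℂ) :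
    sSup {x : ℝ | ∃ μ ∈ spectrum ℂ B, x = ‖μ‖} = (spectralRadius ℂ B).toReal := by
  haveI : Nonempty (Fin n) := Fin.pos_iff_nonempty.mp hn
  haveI : CompleteSpace (Matrix (Fin n) (Fin n) ℂ) := FiniteDimensional.complete ℂ _
  have hfin : spectralRadius ℂ B ≠ ⊤ :=
    ne_top_of_le_ne_top ENNReal.coe_ne_top (spectrum.spectralRadius_le_nnnorm (𝕜 := ℂ) B)
  apply le_antisymm
  · refine Real.sSup_le (fun x hx => ?_) ENNReal.toReal_nonneg
    obtain ⟨μ, hμ, rfl⟩ := hx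
    have h1 : (‖μ‖₊ : ℝ≥0∞) ≤ spectralRadius ℂ B := by
      rw [spectralRadius]; exact le_iSup₂_of_le μ hμ le_rfl
    have h2 := ENNReal.toReal_mono hfin h1
    simpa using h2
  · have hS0 : 0 ≤ sSup {x : ℝ | ∃ μ ∈ spectrum ℂ B, x = ‖μ‖} :=
      Real.sSup_nonneg (by rintro x ⟨μ, hμ, rfl⟩; positivity)
    have h2 : spectralRadius ℂ B
        ≤ ENNReal.ofReal (sSup {x : ℝ | ∃ μ ∈ spectrum ℂ B, x = ‖μ‖}) := by
      rw [spectralRadius]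
      refine iSup₂_le fun μ hμ => ?_
      rw [show ((‖μ‖₊ : ℝ≥0∞)) = ENNReal.ofReal ‖μ‖ from (ofReal_norm μ).symm]
      refine ENNReal.ofReal_le_ofReal ?_
      refine le_csSup ⟨‖B‖, ?_⟩ ⟨μ, hμ, rfl⟩
      rintro x ⟨ν, hν, rfl⟩
      exact spectrum.norm_le_norm_of_mem hν
    calc (spectralRadius ℂ B).toReal
        ≤ (ENNReal.ofReal (sSup {x : ℝ | ∃ μ ∈ spectrum ℂ B, x = ‖μ‖})).toReal :=
          ENNReal.toReal_mono ENNReal.ofReal_ne_top h2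
      _ = _ := ENNReal.toReal_ofReal hS0

lemma eqpart_specRad_eq (A : Matrix (Fin n) (Fin n) ℝ) (Ab : Matrix (Fin m) (Fin m) ℝ)
    (c : Fin n → Fin m) (hc : Function.Surjective c) (hA : ∀ i j, 0 ≤ A i j)
    (hq : ∀ u j, ∑ v ∈ Finset.univ.filter (fun v => c v = j), A u v = Ab (c u) j) :
    sSup {x : ℝ | ∃ μ ∈ spectrum ℂ (A.map Complex.ofReal), x = ‖μ‖}
      = sSup {x : ℝ | ∃ μ ∈ spectrum ℂ (Ab.map Complex.ofReal), x = ‖μ‖} := by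
  rcases Nat.eq_zero_or_pos n with hn | hn
  · subst hn
    haveI : IsEmpty (Fin m) := ⟨fun j => (hc j).elim fun a _ => a.elim0⟩
    have e1 : spectrum ℂ (A.map Complex.ofReal) = ∅ := by
      ext μ; simp [spectrum.mem_iff, isUnit_of_subsingleton]
    have e2 : spectrum ℂ (Ab.map Complex.ofReal) = ∅ := by
      ext μ; simp [spectrum.mem_iff, isUnit_of_subsingleton]
    simp [e1, e2]
  · have hm : 0 < m := by
      rcases isEmpty_or_nonempty (Fin m) with h | h
      · exact (h.elim (c ⟨0, hn⟩))
      · exact Fin.pos_iff_nonempty.mpr h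
    rw [eqpart_sSup_eq hn, eqpart_sSup_eq hm]
    congr 1
    exact le_antisymm (eqpart_specrad_le A Ab c hA hq) (eqpart_specrad_ge A Ab c hc hq)

end Aux4


theorem lifted_spectral_radius
    (N r : ℕ) (P : Matrix (Fin N) (Fin N) ℝ)
    (hnn : ∀ i j, 0 ≤ P i j) (hrow : ∀ i, ∑ j, P i j = 1)
    (hirr : ∀ i j : Fin N, ∃ k : ℕ, 0 < k ∧ 0 < (P ^ k) i j)
    (c : Fin N → Fin r) (hsurj : Function.Surjective c)
    (Pbar : Matrix (Fin r) (Fin r) ℝ)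
    (heq : ∀ (u : Fin N) (j : Fin r),
      ∑ v ∈ Finset.univ.filter (fun v => c v = j), P u v = Pbar (c u) j)
    (gbar : Fin r → ℝ) (hgpos : ∀ i, 0 < gbar i)
    (g : Fin N → ℝ) (hg : ∀ j, g j = gbar (c j))
    (hirrbar : ∀ i j : Fin r, ∃ k : ℕ, 0 < k ∧
      0 < ((Pbar * Matrix.diagonal gbar) ^ k) i j) :
    (∀ (u : Fin N) (j : Fin r),
      ∑ v ∈ Finset.univ.filter (fun v => c v = j), (P * Matrix.diagonal g) u v =
        (Pbar * Matrix.diagonal gbar) (c u) j) ∧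
    specRad (P * Matrix.diagonal g) = specRad (Pbar * Matrix.diagonal gbar) ∧
    (specRad (P * Matrix.diagonal g) < 1 ↔
      specRad (Pbar * Matrix.diagonal gbar) < 1) := by
  have hquot : ∀ (u : Fin N) (j : Fin r),
      ∑ v ∈ Finset.univ.filter (fun v => c v = j), (P * Matrix.diagonal g) u v =
        (Pbar * Matrix.diagonal gbar) (c u) j := by
    intro u j
    calc ∑ v ∈ Finset.univ.filter (fun v => c v = j), (P * Matrix.diagonal g) u v
        = ∑ v ∈ Finset.univ.filter (fun v => c v = j), P u v * gbar j := by
          refine Finset.sum_congr rfl fun v hv => ?_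
          rw [Matrix.mul_diagonal, hg, (Finset.mem_filter.mp hv).2]
      _ = (∑ v ∈ Finset.univ.filter (fun v => c v = j), P u v) * gbar j :=
          (Finset.sum_mul ..).symm
      _ = Pbar (c u) j * gbar j := by rw [heq]
      _ = (Pbar * Matrix.diagonal gbar) (c u) j := (Matrix.mul_diagonal ..).symm
  have hAnn : ∀ i j, 0 ≤ (P * Matrix.diagonal g) i j := by
    intro i j
    rw [Matrix.mul_diagonal, hg]
    exact mul_nonneg (hnn i j) (hgpos _).le
  have hmain : specRad (P * Matrix.diagonal g) = specRad (Pbar * Matrix.diagonal gbar) :=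
    eqpart_specRad_eq _ _ c hsurj hAnn hquot
  exact ⟨hquot, hmain, by rw [hmain]⟩
end
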